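/- Let A be a Lie conformal algebra and M an A-module with a commutative associative product on which ∂^M and all a_λ (a ∈ A) act by derivations. For every basic h-chain ξ ∈ Γ̃_h(A,M), one has [∂, ι_ξ] = ∂ ∘ ι_ξ − ι_ξ ∘ ∂ = ι_{∂ξ} as operators Γ̃^k(A,M) → Γ̃^{k−h}(A,M). In particular, if ξ ∈ Γ_h(A,M) is a reduced h-chain, then ι_ξ commutes with ∂ and induces a well-defined contraction operator Γ^k(A,M) → Γ^{k−h}(A,M) on the reduced complex. -/

import Mathlib

namespace LCC

/-! ### Index utilities -/

/-- Skip one index: the increasing enumeration of `{0,…,k} \ {i}`. -/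
def skip1 (i r : ℕ) : ℕ := if r < i then r else r + 1

/-- Skip two indices `i < j`: the increasing enumeration of `{0,…,k+1} \ {i,j}`. -/
def skip2 (i j r : ℕ) : ℕ := if r < i then r else if r + 1 < j then r + 1 else r + 2

/-- Remove the `i`-th entry of a tuple. -/
def rm1 {α : Type*} {k : ℕ} (i : ℕ) (a : Fin (k+1) → α) : Fin k → α :=
  fun r => a ⟨skip1 i r.1, by have := r.2; unfold skip1; split <;> omega⟩

/-- Remove the `i`-th and `j`-th entries (for `i < j`) of a tuple. -/
def rm2 {α : Type*} {k : ℕ} (i j : ℕ) (a : Fin (k+2) → α) : Fin k → α :=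
  fun r => a ⟨skip2 i j r.1, by
    have := r.2; unfold skip2; split
    · omega
    · split <;> omega⟩

/-- Total weight of a multi-index. -/
def wt {k : ℕ} (ν : Fin k → ℕ) : ℕ := ∑ r, ν r

/-- The multinomial coefficient `(|m| + s)! / (∏ mᵣ! · s!)`. -/
def mnom {K : ℕ} (m : Fin K → ℕ) (s : ℕ) : ℕ :=
  (wt m + s).factorial / ((∏ r, (m r).factorial) * s.factorial)

variable (F : Type*) [Field F]

/-- A Lie conformal algebra over `F`: an `F[∂]`-module `A` (given by the linear
endomorphism `D`), together with a `λ`-bracket recorded through its coefficients: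
`[a_λ b] = ∑ₙ (br a b n) λⁿ`, satisfying sesquilinearity, skew-symmetry and the
Jacobi identity (all written in terms of coefficients of the `λ`-expansions). -/
structure LCA (A : Type*) [AddCommGroup A] [Module F A] where
  D : A →ₗ[F] A
  br : A →ₗ[F] A →ₗ[F] (ℕ → A)
  br_fin : ∀ a b, (Function.support (br a b)).Finite
  sesq_left_zero : ∀ a b, br (D a) b 0 = 0
  sesq_left : ∀ a b n, br (D a) b (n+1) = - br a b n
  sesq_right : ∀ a b n, br a (D b) n
      = D (br a b n) + (if n = 0 then 0 else br a b (n-1))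
  skew : ∀ a b m, br a b m
      = - ∑ᶠ n, ((-1 : F)^n * (n.choose m : F)) • ((D ^ (n - m)) (br b a n))
  jacobi : ∀ a b c m n,
      br a (br b c n) m - br b (br a c m) n
        = ∑ j ∈ Finset.range (m+1), (((n+j).choose j : F)) • br (br a b (m-j)) c (n+j)

/-- A module over a Lie conformal algebra: an `F[∂]`-module `M` with a `λ`-action
of `A`, given through the coefficients `a_λ v = ∑ₙ (act a v n) λⁿ`, satisfying
sesquilinearity and the Jacobi identity. -/
structure LCAMod {A : Type*} [AddCommGroup A] [Module F A] (L : LCA F A)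
    (M : Type*) [AddCommGroup M] [Module F M] where
  D : M →ₗ[F] M
  act : A →ₗ[F] M →ₗ[F] (ℕ → M)
  act_fin : ∀ a m, (Function.support (act a m)).Finite
  sesq_left_zero : ∀ a m, act (L.D a) m 0 = 0
  sesq_left : ∀ a m n, act (L.D a) m (n+1) = - act a m n
  sesq_right : ∀ a m n, act a (D m) n
      = D (act a m n) + (if n = 0 then 0 else act a m (n-1))
  jacobi : ∀ a b v p q,
      act a (act b v q) p - act b (act a v p) q
        = ∑ j ∈ Finset.range (p+1), (((q+j).choose j : F)) • act (L.br a b (p-j)) v (q+j)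

variable {F}
variable {A M : Type*} [AddCommGroup A] [Module F A] [AddCommGroup M] [Module F M]

/-- Torsion elements of the `F[∂]`-module `A`. -/
def IsTor (L : LCA F A) (x : A) : Prop :=
  ∃ p : Polynomial F, p ≠ 0 ∧ Polynomial.aeval L.D p x = 0

/-- `A` decomposes, as an `F[∂]`-module, into the direct sum of its torsion and
a free complementary submodule `F[∂] ⊗ U`. -/
def Decomposes (L : LCA F A) : Prop :=
  ∃ U : Submodule F A, Function.Bijective
    (fun p : {x : A // IsTor L x} × (ℕ →₀ U) =>
      (p.1 : A) + p.2.sum (fun n u => (L.D ^ n) (u : A)))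

variable {L : LCA F A}

/-- The condition for a coefficient family
`γ : A^{⊗ k} → F[λ₁,…,λ_k] ⊗ M` (recorded via the coefficients
`γ a ν` of `λ^ν`) to be a basic `k`-cochain: `F`-multilinearity, polynomiality,
sesquilinearity (A1) and skew-symmetry (A2). -/
structure IsGamma (R : LCAMod F L M) (k : ℕ)
    (γ : (Fin k → A) → (Fin k → ℕ) → M) : Prop where
  map_add : ∀ (a : Fin k → A) (i : Fin k) (x y : A),
    γ (Function.update a i (x + y)) = γ (Function.update a i x) + γ (Function.update a i y)
  map_smul : ∀ (a : Fin k → A) (i : Fin k) (r : F) (x : A),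
    γ (Function.update a i (r • x)) = r • γ (Function.update a i x)
  fin : ∀ a, (Function.support (γ a)).Finite
  sesq : ∀ (a : Fin k → A) (i : Fin k) (x : A) (ν : Fin k → ℕ),
    γ (Function.update a i (L.D x)) ν
      = (if ν i = 0 then 0 else - γ (Function.update a i x) (Function.update ν i (ν i - 1)))
  skew : ∀ (a : Fin k → A) (ν : Fin k → ℕ) (σ : Equiv.Perm (Fin k)),
    γ (a ∘ σ) (ν ∘ σ) = ((Equiv.Perm.sign σ : ℤˣ) : ℤ) • γ a ν

/-- The action of `∂` on basic cochains: `(∂γ) = (∂^M + λ₁ + ⋯ + λ_k) ∘ γ`,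
in terms of coefficients. -/
def GammaD (R : LCAMod F L M) {k : ℕ} (γ : (Fin k → A) → (Fin k → ℕ) → M) :
    (Fin k → A) → (Fin k → ℕ) → M :=
  fun a ν => R.D (γ a ν)
    + ∑ i : Fin k, (if ν i = 0 then 0 else γ a (Function.update ν i (ν i - 1)))

/-- Substitution of the auxiliary variable `μ` by
`λ† = −λ₁ − ⋯ − λ_K − ∂^M` (with `∂^M` moved to the left) in a polynomial
`q` in `λ₁,…,λ_K, μ`, recorded through its coefficients `q ρ n` of `λ^ρ μ^n`.
The result is the coefficient of `λ^ν`. -/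
noncomputable def substDag {K : ℕ} (DM : M →ₗ[F] M)
    (q : (Fin K → ℕ) → ℕ → M) (ν : Fin K → ℕ) : M :=
  ∑ ρ ∈ Finset.Iic ν, ∑ᶠ s : ℕ,
    (((-1 : F)^(wt (fun r => ν r - ρ r) + s)) * (mnom (fun r => ν r - ρ r) s : F)) •
      ((DM ^ s) (q ρ (wt (fun r => ν r - ρ r) + s)))

/-- The condition for a coefficient family
`c : A^{⊗(k+1)} → F[λ₁,…,λ_k] ⊗ M` to be a `(k+1)`-`λ`-bracket
(an element of `C^{k+1}(A,M)`), i.e. conditions B1, B2, B3 of the paper,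
written in terms of the coefficients `c a ν` of `λ^ν`. -/
structure IsCBr (R : LCAMod F L M) (k : ℕ)
    (c : (Fin (k+1) → A) → (Fin k → ℕ) → M) : Prop where
  map_add : ∀ (a : Fin (k+1) → A) (i : Fin (k+1)) (x y : A),
    c (Function.update a i (x + y)) = c (Function.update a i x) + c (Function.update a i y)
  map_smul : ∀ (a : Fin (k+1) → A) (i : Fin (k+1)) (r : F) (x : A),
    c (Function.update a i (r • x)) = r • c (Function.update a i x)
  fin : ∀ a, (Function.support (c a)).Finite
  sesq₁ : ∀ (a : Fin (k+1) → A) (i : Fin k) (x : A) (ν : Fin k → ℕ),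
    c (Function.update a i.castSucc (L.D x)) ν
      = (if ν i = 0 then 0
         else - c (Function.update a i.castSucc x) (Function.update ν i (ν i - 1)))
  sesq₂ : ∀ (a : Fin (k+1) → A) (x : A) (ν : Fin k → ℕ),
    c (Function.update a (Fin.last k) (L.D x)) ν
      = R.D (c (Function.update a (Fin.last k) x) ν)
        + ∑ i : Fin k, (if ν i = 0 then 0
            else c (Function.update a (Fin.last k) x) (Function.update ν i (ν i - 1)))
  skew : ∀ (a : Fin (k+1) → A) (ν : Fin k → ℕ) (σ : Equiv.Perm (Fin (k+1))),
    c a ν = ((Equiv.Perm.sign σ : ℤˣ) : ℤ) • substDag R.D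
      (fun ρ n =>
        if (Fin.snoc ρ n : Fin (k+1) → ℕ) (σ (Fin.last k)) = 0 then
          c (a ∘ σ) (fun i : Fin k => (Fin.snoc ρ n : Fin (k+1) → ℕ) (σ i.castSucc))
        else 0) ν

/-- The subspace `C̄`: poly-`λ`-brackets vanishing whenever one of the arguments is
a torsion element of `A`. -/
def VanishOnTorsion (L : LCA F A) {k : ℕ}
    (c : (Fin (k+1) → A) → (Fin k → ℕ) → M) : Prop :=
  ∀ a ν, (∃ i, IsTor L (a i)) → c a ν = 0

/-- The differential `d : C⁰ = M/∂M → C¹`, `(d∫m)(a) = a_{−∂^M} m`. -/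
noncomputable def dZero (R : LCAMod F L M) (m : M) :
    (Fin 1 → A) → (Fin 0 → ℕ) → M :=
  fun a _ => ∑ᶠ n, ((-1 : F)^n) • ((R.D ^ n) (R.act (a 0) m n))

/-- The second term of the differential `d` of the complex of
poly-`λ`-brackets (the double sum over `i < j` in the paper's formula). -/
noncomputable def dPair (L : LCA F A) (R : LCAMod F L M) :
    ∀ {k : ℕ}, ((Fin (k+1) → A) → (Fin k → ℕ) → M) →
      (Fin (k+2) → A) → (Fin (k+1) → ℕ) → M
  | 0, _, _, _ => 0
  | (s+1), c, a, ν =>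
    ∑ i : Fin (s+2), ∑ j : Fin (s+2),
      if i < j then
        ((-1 : F)^(s + i.1 + j.1 + 1)) •
          ∑ p ∈ Finset.range (ν i + 1),
            substDag R.D
              (fun ρ n =>
                if ρ i = 0 ∧ ρ j = 0 then
                  c (Fin.snoc (Fin.snoc (rm2 i.1 j.1 (Fin.init a)) (a (Fin.last (s+2))))
                      (L.br (a i.castSucc) (a j.castSucc) p))
                    (Fin.snoc (rm2 i.1 j.1 ρ) n)
                else 0)
              (Function.update ν i (ν i - p))
      else 0

/-- The differential `d` on the complex `C^•(A,M)` of poly-`λ`-brackets,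
written in terms of coefficients (formula (1.8) of the paper). Here `c` is a
`(k+1)`-`λ`-bracket and `dRaw c` is a `(k+2)`-`λ`-bracket. -/
noncomputable def dRaw (L : LCA F A) (R : LCAMod F L M) {k : ℕ}
    (c : (Fin (k+1) → A) → (Fin k → ℕ) → M) :
    (Fin (k+2) → A) → (Fin (k+1) → ℕ) → M :=
  fun a ν =>
    (∑ i : Fin (k+1), ((-1 : F)^i.1) •
        R.act (a i.castSucc) (c (rm1 i.1 a) (rm1 i.1 ν)) (ν i))
    + dPair L R c a ν
    + ((-1 : F)^(k+1)) • substDag R.D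
        (fun ρ n =>
          if ρ (Fin.last k) = 0 then
            R.act (a (Fin.last (k+1))) (c (Fin.init a) (Fin.init ρ)) n
          else 0) ν
    + ∑ i : Fin (k+1), ((-1 : F)^(i.1+1)) •
        c (Fin.snoc (rm1 i.1 (Fin.init a)) (L.br (a i.castSucc) (a (Fin.last (k+1))) (ν i)))
          (rm1 i.1 ν)

/-- The second term of the differential `δ` of the basic complex
`Γ̃^•(A,M)` (the double sum over `i < j`). -/
noncomputable def deltaPair (L : LCA F A) (R : LCAMod F L M) :
    ∀ {k : ℕ}, ((Fin k → A) → (Fin k → ℕ) → M) →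
      (Fin (k+1) → A) → (Fin (k+1) → ℕ) → M
  | 0, _, _, _ => 0
  | (s+1), γ, a, ν =>
    ∑ i : Fin (s+2), ∑ j : Fin (s+2),
      if i < j then
        ((-1 : F)^(s + i.1 + j.1)) •
          ∑ p ∈ Finset.range (ν i + 1),
            ((((ν i - p) + ν j).choose (ν i - p) : F)) •
              γ (Fin.snoc (rm2 i.1 j.1 a) (L.br (a i) (a j) p))
                (Fin.snoc (rm2 i.1 j.1 ν) ((ν i - p) + ν j))
      else 0

/-- The differential `δ` of the basic Lie conformal algebra cohomology complex
`Γ̃^•(A,M)`, written in terms of coefficients of the `λ`-expansions. -/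
noncomputable def deltaRaw (L : LCA F A) (R : LCAMod F L M) {k : ℕ}
    (γ : (Fin k → A) → (Fin k → ℕ) → M) :
    (Fin (k+1) → A) → (Fin (k+1) → ℕ) → M :=
  fun a ν =>
    (∑ i : Fin (k+1), ((-1 : F)^i.1) •
        R.act (a i) (γ (rm1 i.1 a) (rm1 i.1 ν)) (ν i))
    + deltaPair L R γ a ν

/-- The map `ψ^{k+1} : Γ̃^{k+1}(A,M) → C^{k+1}(A,M)`,
`{a₁ λ₁ ⋯ a_k λ_k a_{k+1}}_{ψ(γ)} = γ_{λ₁,…,λ_k,λ†}(a₁,…,a_{k+1})`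
where `λ† = −λ₁ − ⋯ − λ_k − ∂^M` (with `∂^M` moved to the left). -/
noncomputable def psiRaw (R : LCAMod F L M) {k : ℕ}
    (γ : (Fin (k+1) → A) → (Fin (k+1) → ℕ) → M) :
    (Fin (k+1) → A) → (Fin k → ℕ) → M :=
  fun a ν => substDag R.D (fun ρ n => γ a (Fin.snoc ρ n)) ν

/-- The map `χ` on "polynomial duals": given
`φ : Hom(F[λ₁,…,λ_K], M)` (recorded through its values `φ ν` on monomials),
`chiMap DM φ` is `φ ∘ (substitution λ_{K+1} ↦ −λ₁ − ⋯ − λ_K + ∂^M)`,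
with `∂^M` moved to the left. -/
noncomputable def chiMap {K : ℕ} (DM : M →ₗ[F] M) (φ : (Fin K → ℕ) → M) :
    (Fin (K+1) → ℕ) → M :=
  fun ν =>
    ∑ m ∈ Finset.Iic (fun _ : Fin K => ν (Fin.last K)),
      if wt m ≤ ν (Fin.last K) then
        (((-1 : F)^(wt m)) * (mnom m (ν (Fin.last K) - wt m) : F)) •
          ((DM ^ (ν (Fin.last K) - wt m)) (φ (fun r => Fin.init ν r + m r)))
      else 0

section Product

variable (F) {N : Type*} [CommRing N] [Algebra F N]

/-- The exterior multiplication of basic cochains, in coefficient form. -/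
noncomputable def wedge {h k : ℕ}
    (α : (Fin h → A) → (Fin h → ℕ) → N) (β : (Fin k → A) → (Fin k → ℕ) → N) :
    (Fin (h+k) → A) → (Fin (h+k) → ℕ) → N :=
  fun a ν =>
    ((h.factorial * k.factorial : F))⁻¹ •
      ∑ σ : Equiv.Perm (Fin (h+k)),
        ((Equiv.Perm.sign σ : ℤˣ) : ℤ) •
          (α (fun i => a (σ (Fin.castAdd k i))) (fun i => ν (σ (Fin.castAdd k i))) *
           β (fun i => a (σ (Fin.natAdd h i))) (fun i => ν (σ (Fin.natAdd h i))))

/-- Contraction of a basic cochain by (a generator of) a basic `h`-chain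
`b ⊗ φ ∈ A^{⊗h} ⊗ Hom(F[λ₁,…,λ_h], N)`. -/
noncomputable def iotaG {h k : ℕ} (b : Fin h → A) (φ : (Fin h → ℕ) → N)
    (γ : (Fin (h + k) → A) → (Fin (h + k) → ℕ) → N) :
    (Fin k → A) → (Fin k → ℕ) → N :=
  fun a ν => ∑ᶠ ρ : Fin h → ℕ, φ ρ * γ (Fin.append b a) (Fin.append ρ ν)

/-- The action of `∂` on (generators of) the space of basic `h`-chains:
`∂(a ⊗ φ) = a ⊗ ((−λ₁^* − ⋯ − λ_h^* + ∂)φ)`. -/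
def chainD (R : LCAMod F L N) {h : ℕ} (φ : (Fin h → ℕ) → N) : (Fin h → ℕ) → N :=
  fun ρ => R.D (φ ρ) - ∑ i : Fin h, φ (Function.update ρ i (ρ i + 1))

/-- Contraction by a basic 1-chain `a₀ ⊗ m(x)`, where `m(x) = ∑ m_k x^k` is recorded
by its coefficient function `m : ℕ → N` (formula (3.23) of the paper, using the
pairing `⟨x^p, λ^q⟩ = q! δ_{p,q}`). -/
noncomputable def iota1 {k : ℕ} (a₀ : A) (m : ℕ → N)
    (γ : (Fin (k+1) → A) → (Fin (k+1) → ℕ) → N) : (Fin k → A) → (Fin k → ℕ) → N :=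
  fun a ν => ∑ᶠ q : ℕ, (q.factorial : F) • (m q * γ (Fin.cons a₀ a) (Fin.cons q ν))

/-- The Lie derivative `L_ξ = δ ∘ ι_ξ + ι_ξ ∘ δ` along a basic 1-chain. -/
noncomputable def lie1 (R : LCAMod F L N) {k : ℕ} (a₀ : A) (m : ℕ → N)
    (γ : (Fin (k+1) → A) → (Fin (k+1) → ℕ) → N) : (Fin (k+1) → A) → (Fin (k+1) → ℕ) → N :=
  deltaRaw L R (iota1 F a₀ m γ) + iota1 F a₀ m (deltaRaw L R γ)

end Product

end LCC

section ContractionAux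

open Function Finset LCC

variable {F : Type*} [Field F]
variable {A M : Type*} [AddCommGroup A] [Module F A] [CommRing M] [Algebra F M]
variable {L : LCA F A} {R : LCAMod F L M}

private lemma castAdd_ne_natAdd {h k : ℕ} (p : Fin h) (i : Fin k) :
    Fin.castAdd k p ≠ Fin.natAdd h i := by
  have := p.isLt
  simp only [Fin.ne_iff_vne, Fin.coe_castAdd, Fin.coe_natAdd]
  omega

private lemma natAdd_inj' {h k : ℕ} {p i : Fin k} (hc : Fin.natAdd h p = Fin.natAdd h i) :
    p = i := by
  have := congrArg Fin.val hc
  simp only [Fin.coe_natAdd] at this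
  exact Fin.ext (by omega)

private lemma castAdd_inj' {h k : ℕ} {p i : Fin h} (hc : Fin.castAdd k p = Fin.castAdd k i) :
    p = i := by
  have := congrArg Fin.val hc
  simp only [Fin.coe_castAdd] at this
  exact Fin.ext this

private lemma append_update_right {α : Type*} {h k : ℕ} (b : Fin h → α) (a : Fin k → α)
    (i : Fin k) (x : α) :
    Fin.append b (Function.update a i x)
      = Function.update (Fin.append b a) (Fin.natAdd h i) x := by
  funext j
  induction j using Fin.addCases with
  | left p =>
      rw [Fin.append_left, Function.update_of_ne (castAdd_ne_natAdd p i), Fin.append_left]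
  | right p =>
      rw [Fin.append_right]
      rcases eq_or_ne p i with rfl | hpi
      · rw [Function.update_self, Function.update_self]
      · rw [Function.update_of_ne hpi,
          Function.update_of_ne (fun hc => hpi (natAdd_inj' hc)), Fin.append_right]

private lemma append_update_left {α : Type*} {h k : ℕ} (b : Fin h → α) (a : Fin k → α)
    (i : Fin h) (x : α) :
    Fin.append (Function.update b i x) a
      = Function.update (Fin.append b a) (Fin.castAdd k i) x := by
  funext j
  induction j using Fin.addCases with
  | left p =>
      rw [Fin.append_left]
      rcases eq_or_ne p i with rfl | hpi
      · rw [Function.update_self, Function.update_self]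
      · rw [Function.update_of_ne hpi,
          Function.update_of_ne (fun hc => hpi (castAdd_inj' hc)), Fin.append_left]
  | right p =>
      rw [Fin.append_right, Function.update_of_ne (castAdd_ne_natAdd i p).symm, Fin.append_right]

/-- Extension of a permutation of the last `k` indices to `Fin (h+k)`. -/
private def extPerm (h k : ℕ) (σ : Equiv.Perm (Fin k)) : Equiv.Perm (Fin (h + k)) :=
  (finSumFinEquiv (m := h) (n := k)).permCongr (Equiv.sumCongr (Equiv.refl (Fin h)) σ)

private lemma extPerm_castAdd {h k : ℕ} (σ : Equiv.Perm (Fin k)) (p : Fin h) :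
    extPerm h k σ (Fin.castAdd k p) = Fin.castAdd k p := by
  simp [extPerm, Equiv.permCongr_apply, finSumFinEquiv_symm_apply_castAdd]

private lemma extPerm_natAdd {h k : ℕ} (σ : Equiv.Perm (Fin k)) (p : Fin k) :
    extPerm h k σ (Fin.natAdd h p) = Fin.natAdd h (σ p) := by
  simp [extPerm, Equiv.permCongr_apply, finSumFinEquiv_symm_apply_natAdd]

private lemma append_comp_extPerm {α : Type*} {h k : ℕ} (b : Fin h → α) (a : Fin k → α)
    (σ : Equiv.Perm (Fin k)) :
    Fin.append b a ∘ (extPerm h k σ) = Fin.append b (a ∘ σ) := by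
  funext j
  induction j using Fin.addCases with
  | left p => simp [extPerm_castAdd, Fin.append_left]
  | right p => simp [extPerm_natAdd, Fin.append_right]

private lemma sign_extPerm {h k : ℕ} (σ : Equiv.Perm (Fin k)) :
    Equiv.Perm.sign (extPerm h k σ) = Equiv.Perm.sign σ := by
  simp [extPerm, Equiv.Perm.sign_permCongr, Equiv.Perm.sign_sumCongr]

/-- Projection to the first `h` coordinates. -/
private def projL (h k : ℕ) (ω : Fin (h + k) → ℕ) : Fin h → ℕ := fun i => ω (Fin.castAdd k i)

private lemma projL_append {h k : ℕ} (ρ : Fin h → ℕ) (ν : Fin k → ℕ) :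
    projL h k (Fin.append ρ ν) = ρ := by
  funext i; simp [projL, Fin.append_left]

private lemma projL_update_natAdd {h k : ℕ} (ω : Fin (h + k) → ℕ) (i : Fin k) (v : ℕ) :
    projL h k (Function.update ω (Fin.natAdd h i) v) = projL h k ω := by
  funext r
  simp [projL, Function.update_of_ne (castAdd_ne_natAdd r i)]

private lemma projL_update_castAdd {h k : ℕ} (ω : Fin (h + k) → ℕ) (i : Fin h) (v : ℕ) :
    projL h k (Function.update ω (Fin.castAdd k i) v)
      = Function.update (projL h k ω) i v := by
  funext r
  rcases eq_or_ne r i with rfl | hri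
  · simp [projL]
  · simp [projL, Function.update_of_ne hri,
      Function.update_of_ne (fun hc => hri (castAdd_inj' hc))]

/-- Shift one coordinate up by `1`. -/
private def shiftI {h : ℕ} (i : Fin h) (ρ : Fin h → ℕ) : Fin h → ℕ :=
  Function.update ρ i (ρ i + 1)

private lemma shiftI_inj {h : ℕ} (i : Fin h) : Function.Injective (shiftI i) := by
  intro ρ τ he
  funext r
  rcases eq_or_ne r i with rfl | hri
  · have := congrFun he r
    simp only [shiftI, Function.update_self] at this
    omega
  · have := congrFun he r
    simpa [shiftI, Function.update_of_ne hri] using this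

private lemma shiftI_update {h : ℕ} (i : Fin h) (ρ : Fin h → ℕ) (h0 : ρ i ≠ 0) :
    shiftI i (Function.update ρ i (ρ i - 1)) = ρ := by
  simp only [shiftI, Function.update_self, Function.update_idem]
  rw [Nat.sub_add_cancel (Nat.one_le_iff_ne_zero.2 h0), Function.update_eq_self]

private lemma update_shiftI {h : ℕ} (i : Fin h) (ρ : Fin h → ℕ) :
    Function.update (shiftI i ρ) i (shiftI i ρ i - 1) = ρ := by
  simp only [shiftI, Function.update_self, Function.update_idem, Nat.add_sub_cancel,
    Function.update_eq_self]

/-- Conversion of the contraction finsum to a finite sum. -/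
private lemma finsum_mul_eq {h k : ℕ} (w : (Fin h → ℕ) → M)
    (Γ : (Fin (h + k) → ℕ) → M) (ν : Fin k → ℕ) (B : Finset (Fin h → ℕ))
    (hB : ∀ ω, Γ ω ≠ 0 → projL h k ω ∈ B) :
    ∑ᶠ ρ : Fin h → ℕ, w ρ * Γ (Fin.append ρ ν) = ∑ ρ ∈ B, w ρ * Γ (Fin.append ρ ν) := by
  apply finsum_eq_finset_sum_of_support_subset
  intro ρ hρ
  have hne : Γ (Fin.append ρ ν) ≠ 0 := right_ne_zero_of_mul hρ
  have := hB _ hne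
  rwa [projL_append] at this

private theorem iotaG_isGamma {h k : ℕ} (b : Fin h → A) (φ : (Fin h → ℕ) → M)
    (γ : (Fin (h + k) → A) → (Fin (h + k) → ℕ) → M) (hγ : IsGamma R (h + k) γ) :
    IsGamma R k (iotaG (h := h) (k := k) b φ γ) := by
  classical
  constructor
  · -- map_add
    intro a i x y
    funext ν
    simp only [iotaG, Pi.add_apply, append_update_right]
    have hx := hγ.fin (Function.update (Fin.append b a) (Fin.natAdd h i) x)
    have hy := hγ.fin (Function.update (Fin.append b a) (Fin.natAdd h i) y)
    set B : Finset (Fin h → ℕ) :=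
      (hx.image (projL h k)).toFinset ∪ (hy.image (projL h k)).toFinset with hBdef
    have hmx : ∀ ω, γ (Function.update (Fin.append b a) (Fin.natAdd h i) x) ω ≠ 0 →
        projL h k ω ∈ B := fun ω hω => Finset.mem_union_left _
      ((Set.Finite.mem_toFinset _).2 ⟨ω, hω, rfl⟩)
    have hmy : ∀ ω, γ (Function.update (Fin.append b a) (Fin.natAdd h i) y) ω ≠ 0 →
        projL h k ω ∈ B := fun ω hω => Finset.mem_union_right _
      ((Set.Finite.mem_toFinset _).2 ⟨ω, hω, rfl⟩)
    have hadd : ∀ ω, γ (Function.update (Fin.append b a) (Fin.natAdd h i) (x + y)) ω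
        = γ (Function.update (Fin.append b a) (Fin.natAdd h i) x) ω
          + γ (Function.update (Fin.append b a) (Fin.natAdd h i) y) ω := fun ω => by
      rw [hγ.map_add (Fin.append b a) (Fin.natAdd h i) x y]; rfl
    have hmxy : ∀ ω, γ (Function.update (Fin.append b a) (Fin.natAdd h i) (x + y)) ω ≠ 0 →
        projL h k ω ∈ B := by
      intro ω hω
      rw [hadd ω] at hω
      by_cases hx0 : γ (Function.update (Fin.append b a) (Fin.natAdd h i) x) ω = 0
      · exact hmy ω (fun hy0 => hω (by rw [hx0, hy0, add_zero]))
      · exact hmx ω hx0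
    rw [finsum_mul_eq φ _ ν B hmxy, finsum_mul_eq φ _ ν B hmx, finsum_mul_eq φ _ ν B hmy,
      ← Finset.sum_add_distrib]
    exact Finset.sum_congr rfl fun ρ _ => by rw [hadd, mul_add]
  · -- map_smul
    intro a i r x
    funext ν
    simp only [iotaG, Pi.smul_apply, append_update_right]
    have hx := hγ.fin (Function.update (Fin.append b a) (Fin.natAdd h i) x)
    set B : Finset (Fin h → ℕ) := (hx.image (projL h k)).toFinset with hBdef
    have hmx : ∀ ω, γ (Function.update (Fin.append b a) (Fin.natAdd h i) x) ω ≠ 0 →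
        projL h k ω ∈ B := fun ω hω => (Set.Finite.mem_toFinset _).2 ⟨ω, hω, rfl⟩
    have hsm : ∀ ω, γ (Function.update (Fin.append b a) (Fin.natAdd h i) (r • x)) ω
        = r • γ (Function.update (Fin.append b a) (Fin.natAdd h i) x) ω := fun ω => by
      rw [hγ.map_smul (Fin.append b a) (Fin.natAdd h i) r x]; rfl
    have hmrx : ∀ ω, γ (Function.update (Fin.append b a) (Fin.natAdd h i) (r • x)) ω ≠ 0 →
        projL h k ω ∈ B := by
      intro ω hω
      apply hmx
      intro h0
      exact hω (by rw [hsm ω, h0, smul_zero])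
    rw [finsum_mul_eq φ _ ν B hmrx, finsum_mul_eq φ _ ν B hmx, Finset.smul_sum]
    exact Finset.sum_congr rfl fun ρ _ => by rw [hsm, mul_smul_comm]
  · -- fin
    intro a
    apply Set.Finite.subset ((hγ.fin (Fin.append b a)).image (fun ω (i : Fin k) =>
      ω (Fin.natAdd h i)))
    intro ν hν
    rw [Function.mem_support] at hν
    have hex : ∃ ρ : Fin h → ℕ, φ ρ * γ (Fin.append b a) (Fin.append ρ ν) ≠ 0 := by
      by_contra hall
      push_neg at hall
      exact hν (finsum_eq_zero_of_forall_eq_zero hall)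
    obtain ⟨ρ, hρ⟩ := hex
    exact ⟨Fin.append ρ ν, right_ne_zero_of_mul hρ,
      funext fun i => Fin.append_right ρ ν i⟩
  · -- sesq
    intro a i x ν
    have key : ∀ ρ : Fin h → ℕ,
        γ (Fin.append b (Function.update a i (L.D x))) (Fin.append ρ ν)
          = if ν i = 0 then 0 else
            - γ (Fin.append b (Function.update a i x))
                (Fin.append ρ (Function.update ν i (ν i - 1))) := by
      intro ρ
      rw [append_update_right b a i (L.D x), hγ.sesq]
      simp only [Fin.append_right]
      rw [← append_update_right ρ ν i (ν i - 1), ← append_update_right b a i x]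
    by_cases h0 : ν i = 0
    · rw [if_pos h0]
      simp only [iotaG]
      apply finsum_eq_zero_of_forall_eq_zero
      intro ρ
      rw [key ρ, if_pos h0, mul_zero]
    · rw [if_neg h0]
      simp only [iotaG]
      have hfx := hγ.fin (Fin.append b (Function.update a i x))
      set B : Finset (Fin h → ℕ) := (hfx.image (projL h k)).toFinset with hBdef
      have hmx : ∀ ω, γ (Fin.append b (Function.update a i x)) ω ≠ 0 →
          projL h k ω ∈ B := fun ω hω => (Set.Finite.mem_toFinset _).2 ⟨ω, hω, rfl⟩
      have hmn : ∀ ω, - γ (Fin.append b (Function.update a i x)) ω ≠ 0 →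
          projL h k ω ∈ B := fun ω hω => hmx ω (fun h' => hω (by rw [h', neg_zero]))
      calc ∑ᶠ ρ : Fin h → ℕ, φ ρ * γ (Fin.append b (Function.update a i (L.D x)))
              (Fin.append ρ ν)
          = ∑ᶠ ρ : Fin h → ℕ, φ ρ *
              (- γ (Fin.append b (Function.update a i x))
                  (Fin.append ρ (Function.update ν i (ν i - 1)))) := by
            apply finsum_congr; intro ρ; rw [key ρ, if_neg h0]
        _ = ∑ ρ ∈ B, φ ρ * (- γ (Fin.append b (Function.update a i x))
              (Fin.append ρ (Function.update ν i (ν i - 1)))) :=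
            finsum_mul_eq φ _ _ B hmn
        _ = - ∑ ρ ∈ B, φ ρ * γ (Fin.append b (Function.update a i x))
              (Fin.append ρ (Function.update ν i (ν i - 1))) := by
            simp only [mul_neg]; exact Finset.sum_neg_distrib _
        _ = - ∑ᶠ ρ : Fin h → ℕ, φ ρ * γ (Fin.append b (Function.update a i x))
              (Fin.append ρ (Function.update ν i (ν i - 1))) := by
            rw [finsum_mul_eq φ _ _ B hmx]
  · -- skew
    intro a ν σ
    simp only [iotaG]
    have key : ∀ ρ : Fin h → ℕ,
        γ (Fin.append b (a ∘ σ)) (Fin.append ρ (ν ∘ σ))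
          = ((Equiv.Perm.sign σ : ℤˣ) : ℤ) • γ (Fin.append b a) (Fin.append ρ ν) := by
      intro ρ
      rw [← append_comp_extPerm b a σ, ← append_comp_extPerm ρ ν σ, hγ.skew, sign_extPerm]
    have hfx := hγ.fin (Fin.append b a)
    set B : Finset (Fin h → ℕ) := (hfx.image (projL h k)).toFinset with hBdef
    have hmx : ∀ ω, γ (Fin.append b a) ω ≠ 0 → projL h k ω ∈ B :=
      fun ω hω => (Set.Finite.mem_toFinset _).2 ⟨ω, hω, rfl⟩
    set z : ℤ := ((Equiv.Perm.sign σ : ℤˣ) : ℤ) with hz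
    have hmz : ∀ ω, z • γ (Fin.append b a) ω ≠ 0 → projL h k ω ∈ B :=
      fun ω hω => hmx ω (fun h' => hω (by rw [h', smul_zero]))
    calc ∑ᶠ ρ : Fin h → ℕ, φ ρ * γ (Fin.append b (a ∘ σ)) (Fin.append ρ (ν ∘ σ))
        = ∑ᶠ ρ : Fin h → ℕ, φ ρ * (z • γ (Fin.append b a) (Fin.append ρ ν)) := by
          apply finsum_congr; intro ρ; rw [key ρ]
      _ = ∑ ρ ∈ B, φ ρ * (z • γ (Fin.append b a) (Fin.append ρ ν)) :=
          finsum_mul_eq φ _ _ B hmz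
      _ = z • ∑ ρ ∈ B, φ ρ * γ (Fin.append b a) (Fin.append ρ ν) := by
          rw [Finset.smul_sum]
          exact Finset.sum_congr rfl fun ρ _ => mul_smul_comm z _ _
      _ = z • ∑ᶠ ρ : Fin h → ℕ, φ ρ * γ (Fin.append b a) (Fin.append ρ ν) := by
          rw [finsum_mul_eq φ _ _ B hmx]

private theorem iotaG_gammaD {h k : ℕ}
    (hD : ∀ m n : M, R.D (m * n) = R.D m * n + m * R.D n)
    (b : Fin h → A) (φ : (Fin h → ℕ) → M)
    (γ : (Fin (h + k) → A) → (Fin (h + k) → ℕ) → M) (hγ : IsGamma R (h + k) γ) :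
    GammaD R (iotaG (h := h) (k := k) b φ γ) - iotaG (h := h) (k := k) b φ (GammaD R γ)
      = iotaG (h := h) (k := k) b (chainD F R φ) γ := by
  classical
  funext a ν
  simp only [Pi.sub_apply]
  have hfin := hγ.fin (Fin.append b a)
  set T : Finset (Fin h → ℕ) := (hfin.image (projL h k)).toFinset with hTdef
  set B : Finset (Fin h → ℕ) :=
    T ∪ Finset.univ.biUnion (fun i : Fin h => T.image (shiftI i)) with hBdef
  have hTB : T ⊆ B := Finset.subset_union_left
  have hmemT : ∀ ω, γ (Fin.append b a) ω ≠ 0 → projL h k ω ∈ T :=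
    fun ω hω => (Set.Finite.mem_toFinset _).2 ⟨ω, hω, rfl⟩
  have hmemB : ∀ ω, γ (Fin.append b a) ω ≠ 0 → projL h k ω ∈ B :=
    fun ω hω => hTB (hmemT ω hω)
  have himB : ∀ i : Fin h, T.image (shiftI i) ⊆ B := by
    intro i x hx
    exact Finset.mem_union_right _ (Finset.mem_biUnion.2 ⟨i, Finset.mem_univ i, hx⟩)
  -- support of GammaD
  have hGDmem : ∀ ω, GammaD R γ (Fin.append b a) ω ≠ 0 → projL h k ω ∈ B := by
    intro ω hω
    by_contra hmem
    apply hω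
    simp only [GammaD]
    have hz0 : γ (Fin.append b a) ω = 0 := by
      by_contra hz; exact hmem (hmemB ω hz)
    rw [hz0, map_zero, zero_add]
    apply Finset.sum_eq_zero
    intro j _
    split_ifs with hj0
    · rfl
    by_contra hne
    induction j using Fin.addCases with
    | left p =>
        apply hmem
        apply himB p
        have hmm : Function.update (projL h k ω) p (ω (Fin.castAdd k p) - 1) ∈ T := by
          have := hmemT _ hne
          rwa [projL_update_castAdd] at this
        refine Finset.mem_image.2 ⟨_, hmm, ?_⟩
        have : projL h k ω p = ω (Fin.castAdd k p) := rfl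
        rw [show Function.update (projL h k ω) p (ω (Fin.castAdd k p) - 1)
            = Function.update (projL h k ω) p (projL h k ω p - 1) from rfl]
        exact shiftI_update p (projL h k ω) hj0
    | right p =>
        apply hmem
        apply hTB
        have := hmemT _ hne
        rwa [projL_update_natAdd] at this
  -- conversions
  have hι : ∀ ν' : Fin k → ℕ, iotaG (h := h) (k := k) b φ γ a ν'
      = ∑ ρ ∈ B, φ ρ * γ (Fin.append b a) (Fin.append ρ ν') := by
    intro ν'
    simp only [iotaG]
    exact finsum_mul_eq φ _ ν' B hmemB
  have h1 : GammaD R (iotaG (h := h) (k := k) b φ γ) a ν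
      = ∑ ρ ∈ B, (R.D (φ ρ) * γ (Fin.append b a) (Fin.append ρ ν)
          + φ ρ * R.D (γ (Fin.append b a) (Fin.append ρ ν))
          + ∑ i : Fin k, if ν i = 0 then 0 else
              φ ρ * γ (Fin.append b a) (Fin.append ρ (Function.update ν i (ν i - 1)))) := by
    simp only [GammaD]
    rw [hι ν, map_sum]
    have hite : ∀ i : Fin k,
        (if ν i = 0 then (0:M) else
          iotaG (h := h) (k := k) b φ γ a (Function.update ν i (ν i - 1)))
        = ∑ ρ ∈ B, if ν i = 0 then 0 else
            φ ρ * γ (Fin.append b a) (Fin.append ρ (Function.update ν i (ν i - 1))) := by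
      intro i
      split_ifs with h0
      · rw [Finset.sum_const_zero]
      · rw [hι]
    rw [Finset.sum_congr rfl (fun i _ => hite i), Finset.sum_comm, ← Finset.sum_add_distrib]
    apply Finset.sum_congr rfl
    intro ρ _
    rw [hD]
  have h2 : iotaG (h := h) (k := k) b φ (GammaD R γ) a ν
      = ∑ ρ ∈ B, (φ ρ * R.D (γ (Fin.append b a) (Fin.append ρ ν))
          + ((∑ i : Fin h, if ρ i = 0 then 0 else
                φ ρ * γ (Fin.append b a) (Fin.append (Function.update ρ i (ρ i - 1)) ν))
            + ∑ i : Fin k, if ν i = 0 then 0 else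
                φ ρ * γ (Fin.append b a) (Fin.append ρ (Function.update ν i (ν i - 1))))) := by
    simp only [iotaG]
    rw [finsum_mul_eq φ (fun ω => GammaD R γ (Fin.append b a) ω) ν B hGDmem]
    apply Finset.sum_congr rfl
    intro ρ _
    simp only [GammaD, mul_add, Finset.mul_sum, mul_ite, mul_zero]
    congr 1
    rw [Fin.sum_univ_add]
    congr 1
    · apply Finset.sum_congr rfl
      intro i _
      rw [Fin.append_left, ← append_update_left]
    · apply Finset.sum_congr rfl
      intro i _
      rw [Fin.append_right, ← append_update_right]
  have h3 : iotaG (h := h) (k := k) b (chainD F R φ) γ a ν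
      = ∑ ρ ∈ B, (R.D (φ ρ) * γ (Fin.append b a) (Fin.append ρ ν)
          - ∑ i : Fin h, φ (shiftI i ρ) * γ (Fin.append b a) (Fin.append ρ ν)) := by
    simp only [iotaG]
    rw [finsum_mul_eq (chainD F R φ) _ ν B hmemB]
    apply Finset.sum_congr rfl
    intro ρ _
    simp only [chainD, shiftI]
    rw [sub_mul, Finset.sum_mul]
  have hstar : ∀ i : Fin h,
      (∑ ρ ∈ B, if ρ i = 0 then (0:M) else
          φ ρ * γ (Fin.append b a) (Fin.append (Function.update ρ i (ρ i - 1)) ν))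
        = ∑ ρ ∈ B, φ (shiftI i ρ) * γ (Fin.append b a) (Fin.append ρ ν) := by
    intro i
    set f : (Fin h → ℕ) → M := fun ρ => if ρ i = 0 then (0:M) else
        φ ρ * γ (Fin.append b a) (Fin.append (Function.update ρ i (ρ i - 1)) ν) with hfdef
    have hzero : ∀ ρ, ρ ∉ T.image (shiftI i) → f ρ = 0 := by
      intro ρ hρ
      simp only [hfdef]
      split_ifs with h0
      · rfl
      by_contra hne
      apply hρ
      have hΓ : γ (Fin.append b a) (Fin.append (Function.update ρ i (ρ i - 1)) ν) ≠ 0 :=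
        right_ne_zero_of_mul hne
      have hmm : Function.update ρ i (ρ i - 1) ∈ T := by
        have := hmemT _ hΓ
        rwa [projL_append] at this
      exact Finset.mem_image.2 ⟨_, hmm, shiftI_update i ρ h0⟩
    have e1 : ∑ ρ ∈ B, f ρ = ∑ ρ ∈ B ∪ B.image (shiftI i), f ρ :=
      Finset.sum_subset Finset.subset_union_left
        (fun x _ hx => hzero x (fun hm => hx (himB i hm)))
    have e2 : ∑ ρ ∈ B.image (shiftI i), f ρ = ∑ ρ ∈ B ∪ B.image (shiftI i), f ρ :=
      Finset.sum_subset Finset.subset_union_right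
        (fun x _ hx => hzero x (fun hm => hx (Finset.image_subset_image hTB hm)))
    have e3 : ∑ ρ ∈ B.image (shiftI i), f ρ = ∑ ρ ∈ B, f (shiftI i ρ) :=
      Finset.sum_image (fun x _ y _ hxy => shiftI_inj i hxy)
    have e4 : ∀ ρ, f (shiftI i ρ) = φ (shiftI i ρ) * γ (Fin.append b a) (Fin.append ρ ν) := by
      intro ρ
      simp only [hfdef]
      rw [if_neg (by simp [shiftI]), update_shiftI]
    calc ∑ ρ ∈ B, f ρ = ∑ ρ ∈ B ∪ B.image (shiftI i), f ρ := e1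
      _ = ∑ ρ ∈ B.image (shiftI i), f ρ := e2.symm
      _ = ∑ ρ ∈ B, f (shiftI i ρ) := e3
      _ = ∑ ρ ∈ B, φ (shiftI i ρ) * γ (Fin.append b a) (Fin.append ρ ν) :=
          Finset.sum_congr rfl fun ρ _ => e4 ρ
  have hW : (∑ ρ ∈ B, ∑ i : Fin h, if ρ i = 0 then (0:M) else
        φ ρ * γ (Fin.append b a) (Fin.append (Function.update ρ i (ρ i - 1)) ν))
      = ∑ ρ ∈ B, ∑ i : Fin h, φ (shiftI i ρ) * γ (Fin.append b a) (Fin.append ρ ν) := by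
    rw [Finset.sum_comm, Finset.sum_congr rfl (fun i _ => hstar i), Finset.sum_comm]
  rw [h1, h2, h3]
  simp only [Finset.sum_add_distrib, Finset.sum_sub_distrib]
  rw [hW]
  abel

end ContractionAux

open LCC in
/-- **Statement 10.** Let `A` be a Lie conformal algebra and `M` an `A`-module with a
commutative associative product on which `∂^M` and all `a_λ` act by derivations.
For every basic `h`-chain `ξ = b ⊗ φ ∈ Γ̃_h(A,M)` one has
`[∂, ι_ξ] = ∂ ∘ ι_ξ − ι_ξ ∘ ∂ = ι_{∂ξ}` as operators `Γ̃^{h+k}(A,M) → Γ̃^k(A,M)`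
(where `∂ξ = b ⊗ ((−λ₁^* − ⋯ − λ_h^* + ∂)φ)`).  In particular, if `ξ` is a reduced
`h`-chain (`∂ξ = 0`), then `ι_ξ` commutes with `∂` and induces a well-defined
contraction operator `Γ^{h+k}(A,M) → Γ^k(A,M)` on the reduced complex. -/
theorem contraction_commutator_with_partial
    {F : Type*} [Field F] [CharZero F]
    {A M : Type*} [AddCommGroup A] [Module F A] [CommRing M] [Algebra F M]
    (L : LCA F A) (R : LCAMod F L M)
    (hD : ∀ m n : M, R.D (m * n) = R.D m * n + m * R.D n)
    (hact : ∀ (a : A) (m n : M) (p : ℕ),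
      R.act a (m * n) p = R.act a m p * n + m * R.act a n p)
    (h k : ℕ) (b : Fin h → A) (φ : (Fin h → ℕ) → M)
    (γ : (Fin (h+k) → A) → (Fin (h+k) → ℕ) → M) (hγ : IsGamma R (h+k) γ) :
    -- ι_ξ maps basic cochains to basic cochains
    IsGamma R k (iotaG (h := h) (k := k) b φ γ) ∧
    -- [∂, ι_ξ] = ι_{∂ξ}
    (GammaD R (iotaG (h := h) (k := k) b φ γ) - iotaG (h := h) (k := k) b φ (GammaD R γ)
      = iotaG (h := h) (k := k) b (chainD F R φ) γ) ∧
    -- reduced chains: ι_ξ commutes with ∂ and descends to the reduced complex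
    (chainD F R φ = 0 →
      (iotaG (h := h) (k := k) b φ (GammaD R γ) = GammaD R (iotaG (h := h) (k := k) b φ γ)) ∧
      ((∃ θ : (Fin (h+k) → A) → (Fin (h+k) → ℕ) → M, IsGamma R (h+k) θ ∧ γ = GammaD R θ) →
        ∃ θ' : (Fin k → A) → (Fin k → ℕ) → M, IsGamma R k θ' ∧ (iotaG (h := h) (k := k) b φ γ : (Fin k → A) → (Fin k → ℕ) → M) = GammaD R θ')) := by
  classical
  refine ⟨iotaG_isGamma b φ γ hγ, iotaG_gammaD hD b φ γ hγ, ?_⟩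
  intro hchain
  have hz : ∀ γ' : (Fin (h+k) → A) → (Fin (h+k) → ℕ) → M,
      iotaG (h := h) (k := k) b (0 : (Fin h → ℕ) → M) γ' = 0 := by
    intro γ'
    funext a ν
    simp [iotaG]
  have key : ∀ γ' : (Fin (h+k) → A) → (Fin (h+k) → ℕ) → M, IsGamma R (h+k) γ' →
      iotaG (h := h) (k := k) b φ (GammaD R γ') = GammaD R (iotaG (h := h) (k := k) b φ γ') := by
    intro γ' hγ'
    have h2 := iotaG_gammaD hD b φ γ' hγ'
    rw [hchain, hz γ'] at h2
    exact (sub_eq_zero.mp h2).symm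
  refine ⟨key γ hγ, ?_⟩
  rintro ⟨θ, hθ, hγθ⟩
  exact ⟨iotaG (h := h) (k := k) b φ θ, iotaG_isGamma b φ θ hθ, by rw [hγθ, key θ hθ]⟩
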